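/- Let T be a rooted tree on a finite vertex set V with |V| = n ≥ 1, given by a parent function p : V ∖ {root} → V such that iterating p from any vertex reaches the root. Then the number of bijections ℓ : V → {1,…,n} such that ℓ(p(v)) < ℓ(v) for every non-root vertex v (increasing labellings of T) equals n! / ∏_{v ∈ V} h_T(v). -/

import Mathlib

open scoped Classical
open Finset

universe u

section auxlemmas
variable {V : Type u}

lemma iter_ne_of_ne {p : V → V} {r : V} (hr : p r = r) {u v : V} {m : ℕ}
    (h : p^[m] u = v) (hv : v ≠ r) : ∀ i, i ≤ m → p^[i] u ≠ r := by
  intro i hi heq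
  apply hv
  rw [← h, show m = (m - i) + i from (Nat.sub_add_cancel hi).symm,
    Function.iterate_add_apply, heq, Function.iterate_fixed hr]

noncomputable def pr (p : V → V) (r : V) (v : {x : V // x ≠ r}) : {x : V // x ≠ r} :=
  if h : p v.1 = r then v else ⟨p v.1, h⟩

lemma pr_iter (p : V → V) (r : V) (m : ℕ) (u : V) (hu : u ≠ r)
    (h : ∀ i, i ≤ m → p^[i] u ≠ r) : ((pr p r)^[m] ⟨u, hu⟩).1 = p^[m] u := by
  induction m with
  | zero => rfl
  | succ k ih =>
    have hk : ∀ i, i ≤ k → p^[i] u ≠ r := fun i hi => h i (hi.trans k.le_succ)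
    have h1 : ((pr p r)^[k] ⟨u, hu⟩) = ⟨p^[k] u, hk k le_rfl⟩ := Subtype.ext (ih hk)
    have h2 : p (p^[k] u) ≠ r := by
      have := h (k+1) le_rfl
      rwa [Function.iterate_succ_apply'] at this
    rw [Function.iterate_succ_apply', Function.iterate_succ_apply', h1, pr, dif_neg h2]

lemma pr_iter_rev (p : V → V) (r : V) :
    ∀ (m : ℕ) (u : {x : V // x ≠ r}) (v : V), ((pr p r)^[m] u).1 = v → ∃ k, p^[k] u.1 = v := by
  intro m
  induction m with
  | zero => exact fun u v h => ⟨0, h⟩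
  | succ k ih =>
    intro u v h
    rw [Function.iterate_succ_apply] at h
    by_cases hc : p u.1 = r
    · have h1 : pr p r u = u := dif_pos hc
      rw [h1] at h; exact ih u v h
    · have h1 : pr p r u = ⟨p u.1, hc⟩ := dif_neg hc
      rw [h1] at h
      obtain ⟨j, hj⟩ := ih _ v h
      exact ⟨j + 1, by rw [Function.iterate_succ_apply]; exact hj⟩

lemma pr_exists_iff {p : V → V} {r : V} (hr : p r = r) {u v : V} (hu : u ≠ r) (hv : v ≠ r) :
    (∃ m, (pr p r)^[m] ⟨u, hu⟩ = ⟨v, hv⟩) ↔ ∃ m, p^[m] u = v := by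
  constructor
  · rintro ⟨m, hm⟩
    exact pr_iter_rev p r m ⟨u, hu⟩ v (by rw [hm])
  · rintro ⟨m, hm⟩
    refine ⟨m, Subtype.ext ?_⟩
    rw [pr_iter p r m u hu (iter_ne_of_ne hr hm hv), hm]

lemma pr_fixed_self {p : V → V} {r : V} (s : {x : V // x ≠ r}) (hs : p s.1 = s.1) :
    pr p r s = s := by
  rw [pr, dif_neg (by rw [hs]; exact s.2)]
  exact Subtype.ext hs

lemma pr_forest (p : V → V) (r : V) (hr : p r = r)
    (hforest : ∀ v, ∃ m, p (p^[m] v) = p^[m] v) :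
    ∀ v : {x : V // x ≠ r}, ∃ m, pr p r ((pr p r)^[m] v) = (pr p r)^[m] v := by
  rintro ⟨x, hx⟩
  obtain ⟨m, hm⟩ := hforest x
  by_cases hs : p^[m] x = r
  · -- the p-path from x hits r; pr stalls just before
    have hex : ∃ k, p^[k] x = r := ⟨m, hs⟩
    have hk0 : Nat.find hex ≠ 0 := by
      intro h0
      have := Nat.find_spec hex
      rw [h0] at this
      exact hx this
    obtain ⟨j, hj⟩ := Nat.exists_eq_succ_of_ne_zero hk0
    have hjr : p^[j+1] x = r := by have := Nat.find_spec hex; rwa [hj] at this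
    have hne : ∀ i, i ≤ j → p^[i] x ≠ r := by
      intro i hi
      exact Nat.find_min hex (by omega)
    have h1 : ((pr p r)^[j] ⟨x, hx⟩) = ⟨p^[j] x, hne j le_rfl⟩ :=
      Subtype.ext (pr_iter p r j x hx hne)
    refine ⟨j, ?_⟩
    rw [h1, pr, dif_pos ((Function.iterate_succ_apply' p j x).symm.trans hjr)]
  · have hne : ∀ i, i ≤ m → p^[i] x ≠ r := iter_ne_of_ne hr rfl hs
    have h1 : ((pr p r)^[m] ⟨x, hx⟩) = ⟨p^[m] x, hs⟩ :=
      Subtype.ext (pr_iter p r m x hx hne)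
    exact ⟨m, by rw [h1, pr_fixed_self ⟨p^[m] x, hs⟩ hm]⟩


section counting
variable [Fintype V] [DecidableEq V]

lemma hook_card_eq (p : V → V) (r : V) (hr : p r = r) (v : {x : V // x ≠ r}) :
    (univ.filter fun u : {x : V // x ≠ r} => ∃ m, (pr p r)^[m] u = v).card
      = (univ.filter fun u : V => ∃ m, p^[m] u = v.1).card := by
  refine Finset.card_bij (fun u _ => u.1) ?_ ?_ ?_
  · rintro ⟨u, hu⟩ ha
    simp only [mem_filter, mem_univ, true_and] at ha ⊢
    have : (⟨v.1, v.2⟩ : {x : V // x ≠ r}) = v := rfl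
    rw [← this] at ha
    exact (pr_exists_iff hr hu v.2).mp ha
  · rintro ⟨a, _⟩ _ ⟨b, _⟩ _ h
    exact Subtype.ext h
  · intro u hu
    simp only [mem_filter, mem_univ, true_and] at hu
    have hur : u ≠ r := by
      rintro rfl
      obtain ⟨m, hm⟩ := hu
      rw [Function.iterate_fixed hr] at hm
      exact v.2 hm.symm
    refine ⟨⟨u, hur⟩, ?_, rfl⟩
    simp only [mem_filter, mem_univ, true_and]
    have : (⟨v.1, v.2⟩ : {x : V // x ≠ r}) = v := rfl
    rw [← this]
    exact (pr_exists_iff hr hur v.2).mpr hu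

lemma sum_root_hooks (p : V → V) (hforest : ∀ v, ∃ m, p (p^[m] v) = p^[m] v) :
    ∑ r ∈ univ.filter (fun r : V => p r = r),
      (univ.filter fun u : V => ∃ m, p^[m] u = r).card = Fintype.card V := by
  classical
  set f : V → V := fun u => p^[(hforest u).choose] u with hf
  have hfix : ∀ u, p (f u) = f u := fun u => (hforest u).choose_spec
  have funiq : ∀ u r, p r = r → ((∃ m, p^[m] u = r) ↔ f u = r) := by
    intro u r hrr
    constructor
    · rintro ⟨m, hm⟩
      rcases le_total m ((hforest u).choose) with h | h
      · have : f u = p^[(hforest u).choose - m] (p^[m] u) := by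
          rw [← Function.iterate_add_apply, Nat.sub_add_cancel h]
        rw [this, hm, Function.iterate_fixed hrr]
      · have : p^[m] u = p^[m - (hforest u).choose] (f u) := by
          rw [hf]
          rw [← Function.iterate_add_apply, Nat.sub_add_cancel h]
        rw [this, Function.iterate_fixed (hfix u)] at hm
        exact hm
    · intro h
      exact ⟨(hforest u).choose, h⟩
  rw [← Finset.card_univ,
    Finset.card_eq_sum_card_fiberwise (f := f) (t := univ.filter (fun r : V => p r = r))
      (fun u _ => by simp only [Finset.coe_filter, Set.mem_setOf_eq, mem_filter, mem_univ, true_and]; exact hfix u)]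
  refine Finset.sum_congr rfl fun r hrt => ?_
  simp only [mem_filter, mem_univ, true_and] at hrt
  congr 1
  apply Finset.filter_congr
  intro u _
  exact funiq u r hrt

noncomputable def shrink (r : V) (n : ℕ) (ℓ : V ≃ Fin (n+1)) (h0 : ℓ r = 0) :
    {x : V // x ≠ r} ≃ Fin n where
  toFun v := (ℓ v.1).pred (fun h => v.2 (ℓ.injective (h.trans h0.symm)))
  invFun i := ⟨ℓ.symm i.succ, fun h => (Fin.succ_ne_zero i) (by
    have h2 := congrArg ℓ (show (ℓ.symm i.succ) = r from h)
    rwa [Equiv.apply_symm_apply, h0] at h2)⟩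
  left_inv v := Subtype.ext (by
    show ℓ.symm ((ℓ v.1).pred _).succ = v.1
    rw [Fin.succ_pred, Equiv.symm_apply_apply])
  right_inv i := by
    show (ℓ (ℓ.symm i.succ)).pred _ = i
    apply Fin.ext
    rw [Fin.coe_pred, Equiv.apply_symm_apply, Fin.val_succ]
    omega

noncomputable def grow (r : V) (n : ℕ) (e : {x : V // x ≠ r} ≃ Fin n) : V ≃ Fin (n+1) where
  toFun v := if h : v = r then 0 else (e ⟨v, h⟩).succ
  invFun i := if h : i = 0 then r else (e.symm (i.pred h)).1
  left_inv v := by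
    by_cases h : v = r
    · simp [h]
    · simp only [dif_neg h, dif_neg (Fin.succ_ne_zero (e ⟨v, h⟩)), Fin.pred_succ,
        Equiv.symm_apply_apply]
  right_inv i := by
    by_cases h : i = 0
    · simp [h]
    · have hx : (e.symm (i.pred h)).1 ≠ r := (e.symm (i.pred h)).2
      simp only [dif_neg h, dif_neg hx]
      rw [show (⟨(e.symm (i.pred h)).1, hx⟩ : {x : V // x ≠ r}) = e.symm (i.pred h) from rfl,
        Equiv.apply_symm_apply, Fin.succ_pred]


lemma shrink_val (r : V) (n : ℕ) (ℓ : V ≃ Fin (n+1)) (h0 : ℓ r = 0) (v : {x : V // x ≠ r}) :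
    (shrink r n ℓ h0 v).val = (ℓ v.1).val - 1 := rfl

lemma grow_apply_of_ne (r : V) (n : ℕ) (e : {x : V // x ≠ r} ≃ Fin n) {v : V} (h : v ≠ r) :
    grow r n e v = (e ⟨v, h⟩).succ := dif_neg h

lemma grow_apply_r (r : V) (n : ℕ) (e : {x : V // x ≠ r} ≃ Fin n) :
    grow r n e r = 0 := dif_pos rfl

lemma grow_symm_zero (r : V) (n : ℕ) (e : {x : V // x ≠ r} ≃ Fin n) :
    (grow r n e).symm 0 = r := by
  rw [← grow_apply_r r n e, Equiv.symm_apply_apply]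

lemma pr_ne_iff (p : V → V) (r : V) (v : {x : V // x ≠ r}) :
    pr p r v ≠ v ↔ (p v.1 ≠ r ∧ p v.1 ≠ v.1) := by
  by_cases h : p v.1 = r
  · simp only [pr, dif_pos h]
    simp [h]
  · simp only [pr, dif_neg h]
    rw [ne_eq, Subtype.ext_iff]
    simp [h]

lemma pr_eq_of_ne (p : V → V) (r : V) (v : {x : V // x ≠ r}) (h : p v.1 ≠ r) :
    pr p r v = ⟨p v.1, h⟩ := dif_neg h

lemma fiber_card_eq (p : V → V) (r : V) (hr : p r = r) (n : ℕ) :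
    (univ.filter fun ℓ : V ≃ Fin (n+1) =>
        (∀ v, p v ≠ v → ℓ (p v) < ℓ v) ∧ ℓ.symm 0 = r).card
      = (univ.filter fun e : {x : V // x ≠ r} ≃ Fin n =>
          ∀ v, pr p r v ≠ v → e (pr p r v) < e v).card := by
  have h0 : ∀ (ℓ : V ≃ Fin (n+1)), ℓ.symm 0 = r → ℓ r = 0 := by
    intro ℓ hs
    rw [← hs, Equiv.apply_symm_apply]
  have hvalne : ∀ (ℓ : V ≃ Fin (n+1)), ℓ r = 0 → ∀ {x : V}, x ≠ r → (ℓ x).val ≠ 0 := by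
    intro ℓ hℓr x hx hv
    exact hx (ℓ.injective (by rw [hℓr]; exact Fin.ext hv))
  refine Finset.card_bij (fun ℓ hℓ => shrink r n ℓ (h0 ℓ (by
      simp only [mem_filter, mem_univ, true_and] at hℓ; exact hℓ.2))) ?_ ?_ ?_
  · intro ℓ hℓ
    simp only [mem_filter, mem_univ, true_and] at hℓ ⊢
    obtain ⟨hinc, hsym⟩ := hℓ
    intro v hv
    obtain ⟨h1, h2⟩ := (pr_ne_iff p r v).mp hv
    rw [pr_eq_of_ne p r v h1]
    rw [Fin.lt_def, shrink_val, shrink_val]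
    have hd : ((⟨p v.1, h1⟩ : {x : V // x ≠ r}) : V) = p v.1 := rfl
    rw [hd]
    have hlt := hinc v.1 h2
    rw [Fin.lt_def] at hlt
    have ha := hvalne ℓ (h0 ℓ hsym) h1
    omega
  · intro ℓ₁ hℓ₁ ℓ₂ hℓ₂ heq
    simp only [mem_filter, mem_univ, true_and] at hℓ₁ hℓ₂
    apply Equiv.ext
    intro v
    by_cases hv : v = r
    · rw [hv, h0 ℓ₁ hℓ₁.2, h0 ℓ₂ hℓ₂.2]
    · have hval := congrArg (fun e : {x : V // x ≠ r} ≃ Fin n => (e ⟨v, hv⟩).val) heq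
      simp only [shrink_val] at hval
      have h1 := hvalne ℓ₁ (h0 ℓ₁ hℓ₁.2) hv
      have h2 := hvalne ℓ₂ (h0 ℓ₂ hℓ₂.2) hv
      exact Fin.ext (by omega)
  · intro e he
    simp only [mem_filter, mem_univ, true_and] at he
    have hmem : grow r n e ∈ univ.filter fun ℓ : V ≃ Fin (n+1) =>
        (∀ v, p v ≠ v → ℓ (p v) < ℓ v) ∧ ℓ.symm 0 = r := by
      simp only [mem_filter, mem_univ, true_and]
      refine ⟨?_, grow_symm_zero r n e⟩
      intro v hpv
      have hvr : v ≠ r := by rintro rfl; exact hpv hr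
      rw [grow_apply_of_ne r n e hvr]
      by_cases hpr : p v = r
      · rw [hpr, grow_apply_r]
        exact Fin.succ_pos _
      · rw [grow_apply_of_ne r n e hpr]
        rw [Fin.succ_lt_succ_iff]
        have hv' : pr p r ⟨v, hvr⟩ ≠ ⟨v, hvr⟩ :=
          (pr_ne_iff p r ⟨v, hvr⟩).mpr ⟨hpr, hpv⟩
        have := he ⟨v, hvr⟩ hv'
        rwa [pr_eq_of_ne p r ⟨v, hvr⟩ hpr] at this
    refine ⟨grow r n e, hmem, ?_⟩
    apply Equiv.ext
    intro v
    apply Fin.ext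
    rw [shrink_val]
    rw [grow_apply_of_ne r n e v.2, Fin.val_succ]
    simp

end counting
end auxlemmas

theorem forest_hook : ∀ (n : ℕ) {V : Type u} [Fintype V] [DecidableEq V] (p : V → V),
    Fintype.card V = n → (∀ v, ∃ m, p (p^[m] v) = p^[m] v) →
    (Fintype.card {ℓ : V ≃ Fin n // ∀ v, p v ≠ v → ℓ (p v) < ℓ v} : ℚ) *
      ∏ v : V, ((Finset.univ.filter fun u => ∃ m, p^[m] u = v).card : ℚ) = n.factorial := by
  intro n
  induction n with
  | zero =>
    intro V _ _ p hcard _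
    haveI : IsEmpty V := Fintype.card_eq_zero_iff.mp hcard
    have h1 : Fintype.card {ℓ : V ≃ Fin 0 // ∀ v, p v ≠ v → ℓ (p v) < ℓ v} = 1 := by
      refine Fintype.card_eq_one_iff.mpr
        ⟨⟨Equiv.equivOfIsEmpty V (Fin 0), fun v => isEmptyElim v⟩, ?_⟩
      rintro ⟨ℓ, _⟩
      exact Subtype.ext (Equiv.ext fun v => isEmptyElim v)
    rw [h1, Finset.univ_eq_empty, Finset.prod_empty]
    simp
  | succ n IH =>
    intro V _ _ p hcard hforest
    have hsub : (Fintype.card {ℓ : V ≃ Fin (n+1) // ∀ v, p v ≠ v → ℓ (p v) < ℓ v})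
        = (univ.filter fun ℓ : V ≃ Fin (n+1) => ∀ v, p v ≠ v → ℓ (p v) < ℓ v).card :=
      Fintype.card_subtype _
    have hfib : (univ.filter fun ℓ : V ≃ Fin (n+1) => ∀ v, p v ≠ v → ℓ (p v) < ℓ v).card
        = ∑ r ∈ univ.filter (fun r : V => p r = r),
            (univ.filter fun ℓ : V ≃ Fin (n+1) =>
              (∀ v, p v ≠ v → ℓ (p v) < ℓ v) ∧ ℓ.symm 0 = r).card := by
      rw [Finset.card_eq_sum_card_fiberwise
        (f := fun ℓ : V ≃ Fin (n+1) => ℓ.symm 0)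
        (t := univ.filter (fun r : V => p r = r))
        (fun ℓ hℓ => by
          simp only [Finset.coe_filter, Set.mem_setOf_eq, mem_filter, mem_univ, true_and] at hℓ ⊢
          by_contra hne
          have h2 := hℓ (ℓ.symm 0) hne
          rw [Equiv.apply_symm_apply] at h2
          simp [Fin.lt_def] at h2)]
      exact Finset.sum_congr rfl fun r _ => by rw [Finset.filter_filter]
    have hroot : ∀ r ∈ univ.filter (fun r : V => p r = r),
        ((univ.filter fun ℓ : V ≃ Fin (n+1) =>
          (∀ v, p v ≠ v → ℓ (p v) < ℓ v) ∧ ℓ.symm 0 = r).card : ℚ)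
          * ∏ v ∈ univ.erase r, ((univ.filter fun u : V => ∃ m, p^[m] u = v).card : ℚ)
        = n.factorial := by
      intro r hrmem
      simp only [mem_filter, mem_univ, true_and] at hrmem
      have hr : p r = r := hrmem
      have hcard' : Fintype.card {x : V // x ≠ r} = n := by
        have h1 : Fintype.card {x : V // ¬ (x = r)}
            = Fintype.card V - Fintype.card {x : V // x = r} := Fintype.card_subtype_compl _
        rw [Fintype.card_subtype_eq, hcard] at h1
        exact h1
      have key := IH (pr p r) hcard' (pr_forest p r hr hforest)
      rw [Fintype.card_subtype] at key
      rw [fiber_card_eq p r hr n]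
      have hprod : (∏ v ∈ univ.erase r, ((univ.filter fun u : V => ∃ m, p^[m] u = v).card : ℚ))
          = ∏ v : {x : V // x ≠ r},
              ((univ.filter fun u : {x : V // x ≠ r} => ∃ m, (pr p r)^[m] u = v).card : ℚ) := by
        rw [Finset.prod_subtype (p := fun x : V => x ≠ r) (univ.erase r)
          (fun x => by simp [Finset.mem_erase])
          (fun v : V => ((univ.filter fun u : V => ∃ m, p^[m] u = v).card : ℚ))]
        exact Finset.prod_congr rfl fun v _ => by rw [hook_card_eq p r hr v]
      rw [hprod]
      exact key
    have hsum : ∑ r ∈ univ.filter (fun r : V => p r = r),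
        ((univ.filter fun u : V => ∃ m, p^[m] u = r).card : ℚ) = ((n : ℚ) + 1) := by
      have h1 := sum_root_hooks p hforest
      rw [hcard] at h1
      have h2 := congrArg (fun k : ℕ => (k : ℚ)) h1
      push_cast at h2
      exact h2
    rw [hsub, hfib]
    push_cast
    rw [Finset.sum_mul]
    have hterm : ∀ r ∈ univ.filter (fun r : V => p r = r),
        ((univ.filter fun ℓ : V ≃ Fin (n+1) =>
          (∀ v, p v ≠ v → ℓ (p v) < ℓ v) ∧ ℓ.symm 0 = r).card : ℚ)
          * ∏ v : V, ((univ.filter fun u : V => ∃ m, p^[m] u = v).card : ℚ)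
        = ((univ.filter fun u : V => ∃ m, p^[m] u = r).card : ℚ) * n.factorial := by
      intro r hrmem
      rw [← Finset.mul_prod_erase univ
        (fun v : V => ((univ.filter fun u : V => ∃ m, p^[m] u = v).card : ℚ)) (mem_univ r)]
      rw [← mul_assoc, mul_comm
        ((univ.filter fun ℓ : V ≃ Fin (n+1) =>
          (∀ v, p v ≠ v → ℓ (p v) < ℓ v) ∧ ℓ.symm 0 = r).card : ℚ)
        ((univ.filter fun u : V => ∃ m, p^[m] u = r).card : ℚ), mul_assoc,
        hroot r hrmem]
    rw [Finset.sum_congr rfl hterm, ← Finset.sum_mul, hsum, Nat.factorial_succ]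
    push_cast
    ring

/-- Knuth's hook length formula for rooted trees: if `T` is a rooted tree on a finite
vertex set `V` with `n ≥ 1` vertices, given by a parent function `p` (fixing the root,
and such that iterating `p` from any vertex reaches the root), then the number of
increasing labellings of `T` — bijections `ℓ : V → {1, …, n}` with `ℓ(p(v)) < ℓ(v)`
for every non-root vertex `v` — equals `n! / ∏_{v ∈ V} h_T(v)`, where
`h_T(v)` is the number of elements of the hook of `v` (the set of `v` and its
descendants). -/
theorem stmt8 {V : Type*} [Fintype V] [DecidableEq V] (n : ℕ) (hn : 1 ≤ n)
    (hcard : Fintype.card V = n) (root : V) (p : V → V) (hroot : p root = root)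
    (hreach : ∀ v, ∃ m, p^[m] v = root) :
    (Fintype.card {ℓ : V ≃ Fin n // ∀ v, v ≠ root → ℓ (p v) < ℓ v} : ℚ)
      = (n.factorial : ℚ) /
          ∏ v : V, ((Finset.univ.filter fun u => ∃ m, p^[m] u = v).card : ℚ) := by
  have hforest : ∀ v, ∃ m, p (p^[m] v) = p^[m] v := by
    intro v
    obtain ⟨m, hm⟩ := hreach v
    exact ⟨m, by rw [hm, hroot]⟩
  have hiff : ∀ ℓ : V ≃ Fin n,
      (∀ v, v ≠ root → ℓ (p v) < ℓ v) ↔ (∀ v, p v ≠ v → ℓ (p v) < ℓ v) := by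
    intro ℓ
    constructor
    · intro h v hv
      refine h v ?_
      rintro rfl; exact hv hroot
    · intro h v hv
      refine h v ?_
      intro hp
      obtain ⟨m, hm⟩ := hreach v
      rw [Function.iterate_fixed hp] at hm
      exact hv hm
  have hc : Fintype.card {ℓ : V ≃ Fin n // ∀ v, v ≠ root → ℓ (p v) < ℓ v}
      = Fintype.card {ℓ : V ≃ Fin n // ∀ v, p v ≠ v → ℓ (p v) < ℓ v} :=
    Fintype.card_congr (Equiv.subtypeEquivRight hiff)
  have hne : (∏ v : V, ((Finset.univ.filter fun u => ∃ m, p^[m] u = v).card : ℚ)) ≠ 0 := by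
    apply Finset.prod_ne_zero_iff.mpr
    intro v _
    have hv : v ∈ Finset.univ.filter fun u => ∃ m, p^[m] u = v := by
      simp only [mem_filter, mem_univ, true_and]; exact ⟨0, rfl⟩
    have hpos := Finset.card_pos.mpr ⟨v, hv⟩
    exact_mod_cast hpos.ne'
  rw [hc, eq_div_iff hne]
  exact forest_hook n p hcard hforest
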